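/- Let R be a commutative ring with identity. If Z(R)² = (0), i.e., xy = 0 for all zero-divisors x, y of R, then Z(R) is an ideal of R. -/

import Mathlib

/-- The set of zero-divisors of a commutative ring (including `0`). -/
def zdSet (R : Type*) [CommRing R] : Set R :=
  {x : R | ∃ y : R, y ≠ 0 ∧ x * y = 0}

/-- The set of nonzero zero-divisors. -/
def zdStar (R : Type*) [CommRing R] : Set R :=
  {x : R | x ≠ 0 ∧ ∃ y : R, y ≠ 0 ∧ x * y = 0}

/-- The zero-divisor graph `Γ(R)`: vertices are the nonzero zero-divisors, and distinct
`x`, `y` are adjacent iff `x * y = 0`. -/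
def zdGraph (R : Type*) [CommRing R] : SimpleGraph (zdStar R) where
  Adj x y := x.1 ≠ y.1 ∧ x.1 * y.1 = 0
  symm := ⟨fun x y h => ⟨h.1.symm, by rw [mul_comm]; exact h.2⟩⟩
  loopless := ⟨fun x h => h.1 rfl⟩

/-- The extended zero-divisor graph `Γ̃(R)`: vertices are the nonzero zero-divisors, and
distinct `x`, `y` are adjacent iff `x * y = 0` or `x + y ∈ Z(R)`. -/
def zdExtGraph (R : Type*) [CommRing R] : SimpleGraph (zdStar R) where
  Adj x y := x.1 ≠ y.1 ∧ (x.1 * y.1 = 0 ∨ x.1 + y.1 ∈ zdSet R)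
  symm := ⟨fun x y h => ⟨h.1.symm, by rw [mul_comm, add_comm]; exact h.2⟩⟩
  loopless := ⟨fun x h => h.1 rfl⟩

universe u

theorem stmt2 (R : Type u) [CommRing R] [Nontrivial R]
    (hsq : ∀ x ∈ zdSet R, ∀ y ∈ zdSet R, x * y = 0) :
    ∃ I : Ideal R, (I : Set R) = zdSet R := by
  refine ⟨{ carrier := zdSet R
            zero_mem' := ⟨1, one_ne_zero, zero_mul 1⟩
            add_mem' := ?_
            smul_mem' := ?_ }, rfl⟩
  · rintro a b ha hb
    by_cases h0 : a = 0
    · simpa [h0] using hb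
    · exact ⟨a, h0, by rw [add_mul, hsq a ha a ha, hsq b hb a ha, add_zero]⟩
  · rintro c x ⟨y, hy, hxy⟩
    exact ⟨y, hy, by rw [smul_eq_mul, mul_assoc, hxy, mul_zero]⟩
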